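/- For every dimension d ≥ 1, every nonempty set E ⊆ ℝ^d, and all real numbers r, s with 0 < r ≤ s, the Lebesgue measures of the open neighborhoods satisfy vol(E_s) ≤ (s/r)^d · vol(E_r) (an inequality in [0,∞]). -/

import Mathlib

open MeasureTheory Metric Filter Set
open scoped ENNReal Topology

/-- Nearest-point projections are "monotone": moving the base points towards each other. -/
private lemma expand_aux {V : Type*} [NormedAddCommGroup V] [InnerProductSpace ℝ V]
    (z w a b : V) (h1 : dist z a ≤ dist z b) (h2 : dist w b ≤ dist w a)
    {l : ℝ} (hl0 : 0 ≤ l) (hl1 : l ≤ 1) :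
    l * dist z w ≤ dist (l • z + (1 - l) • a) (l • w + (1 - l) • b) := by
  have e1 : ‖z - a‖ ^ 2 ≤ ‖z - b‖ ^ 2 := by
    rw [dist_eq_norm, dist_eq_norm] at h1
    exact pow_le_pow_left₀ (norm_nonneg _) h1 2
  have e2 : ‖w - b‖ ^ 2 ≤ ‖w - a‖ ^ 2 := by
    rw [dist_eq_norm, dist_eq_norm] at h2
    exact pow_le_pow_left₀ (norm_nonneg _) h2 2
  have exp : ∀ x y : V, ‖x - y‖ ^ 2 = ‖x‖ ^ 2 - 2 * inner ℝ x y + ‖y‖ ^ 2 := fun x y =>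
    norm_sub_sq_real x y
  rw [exp, exp] at e1 e2
  have hmono : (0 : ℝ) ≤ inner ℝ (z - w) (a - b) := by
    have : (inner ℝ (z - w) (a - b) : ℝ) =
        inner ℝ z a - inner ℝ z b - inner ℝ w a + inner ℝ w b := by
      simp [inner_sub_left, inner_sub_right]; ring
    rw [this]
    linarith
  -- now compare squares
  have hdiff : (l • z + (1 - l) • a) - (l • w + (1 - l) • b)
      = l • (z - w) + (1 - l) • (a - b) := by module
  have hsq : (l * dist z w) ^ 2 ≤ dist (l • z + (1 - l) • a) (l • w + (1 - l) • b) ^ 2 := by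
    simp only [dist_eq_norm]
    rw [hdiff]
    have hns : ‖l • (z - w) + (1 - l) • (a - b)‖ ^ 2
        = ‖l • (z - w)‖ ^ 2 + 2 * inner ℝ (l • (z - w)) ((1 - l) • (a - b))
          + ‖(1 - l) • (a - b)‖ ^ 2 := norm_add_sq_real _ _
    have hin : (inner ℝ (l • (z - w)) ((1 - l) • (a - b)) : ℝ)
        = l * (1 - l) * inner ℝ (z - w) (a - b) := by
      rw [real_inner_smul_left, real_inner_smul_right]; ring
    have hn1 : ‖l • (z - w)‖ = l * ‖z - w‖ := by
      rw [norm_smul, Real.norm_eq_abs, abs_of_nonneg hl0]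
    have hn2 : ‖(1 - l) • (a - b)‖ ^ 2 ≥ 0 := sq_nonneg _
    rw [hns, hin, hn1]
    nlinarith [mul_nonneg (mul_nonneg hl0 (by linarith : (0:ℝ) ≤ 1 - l)) hmono,
      sq_nonneg ‖(1 - l) • (a - b)‖]
  have h0 : 0 ≤ l * dist z w := mul_nonneg hl0 dist_nonneg
  nlinarith [dist_nonneg (x := l • z + (1 - l) • a) (y := l • w + (1 - l) • b)]

/-- For every dimension `d ≥ 1`, every nonempty `E ⊆ ℝ^d` and all reals `0 < r ≤ s`, the
Lebesgue measures of the open neighborhoods satisfy `vol(E_s) ≤ (s/r)^d · vol(E_r)`. -/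
theorem volume_thickening_le (d : ℕ) (hd : 1 ≤ d) (E : Set (EuclideanSpace ℝ (Fin d)))
    (hE : E.Nonempty) (r s : ℝ) (hr : 0 < r) (hrs : r ≤ s) :
    volume (Metric.thickening s E) ≤
      ENNReal.ofReal ((s / r) ^ d) * volume (Metric.thickening r E) := by
  classical
  have hs0 : 0 < s := hr.trans_le hrs
  set l : ℝ := r / s with hl
  have hl0 : 0 < l := div_pos hr hs0
  have hl1 : l ≤ 1 := (div_le_one hs0).2 hrs
  -- nearest point projection onto closure E
  have hg : ∀ z : EuclideanSpace ℝ (Fin d), ∃ y ∈ closure E, Metric.infDist z (closure E) = dist z y :=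
    fun z => isClosed_closure.exists_infDist_eq_dist hE.closure z
  choose g hgmem hgdist using hg
  have hgnear : ∀ z : EuclideanSpace ℝ (Fin d), ∀ y ∈ closure E, dist z (g z) ≤ dist z y := by
    intro z y hy
    rw [← hgdist z]
    exact Metric.infDist_le_dist_of_mem hy
  set f : EuclideanSpace ℝ (Fin d) → EuclideanSpace ℝ (Fin d) := fun z => l • z + (1 - l) • g z with hf
  -- expansion property
  have hexp : ∀ z w : EuclideanSpace ℝ (Fin d), l * dist z w ≤ dist (f z) (f w) := by
    intro z w
    exact expand_aux z w (g z) (g w) (hgnear z (g w) (hgmem w)) (hgnear w (g z) (hgmem z))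
      hl0.le hl1
  have hinj : ∀ z w : EuclideanSpace ℝ (Fin d), f z = f w → z = w := by
    intro z w h
    have := hexp z w
    rw [h, dist_self] at this
    have : dist z w ≤ 0 := by
      by_contra hcon
      push_neg at hcon
      nlinarith
    exact dist_le_zero.1 this
  set A := Metric.thickening s E with hA
  set B := Metric.thickening r E with hB
  -- f maps A into B
  have himg : ∀ z ∈ A, f z ∈ B := by
    intro z hz
    have hz' : Metric.infDist z E < s := (Metric.mem_thickening_iff_infDist_lt hE).1 hz
    have hzg : dist z (g z) < s := by
      rw [← hgdist z, Metric.infDist_closure]; exact hz'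
    have hfg : dist (f z) (g z) < r := by
      have : f z - g z = l • (z - g z) := by rw [hf]; module
      rw [dist_eq_norm, this, norm_smul, Real.norm_eq_abs, abs_of_nonneg hl0.le]
      calc l * ‖z - g z‖ < l * s := by
            have := (dist_eq_norm z (g z)) ▸ hzg
            exact (mul_lt_mul_iff_right₀ hl0).2 this
        _ = r := by rw [hl]; field_simp
    have : Metric.infDist (f z) E < r := by
      calc Metric.infDist (f z) E = Metric.infDist (f z) (closure E) :=
            (Metric.infDist_closure).symm
        _ ≤ dist (f z) (g z) := Metric.infDist_le_dist_of_mem (hgmem z)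
        _ < r := hfg
    exact (Metric.mem_thickening_iff_infDist_lt hE).2 this
  -- inverse map
  set h : EuclideanSpace ℝ (Fin d) → EuclideanSpace ℝ (Fin d) := fun y => if hy : ∃ z, z ∈ A ∧ f z = y then hy.choose else 0 with hh
  have hinv : ∀ z ∈ A, h (f z) = z := by
    intro z hz
    have hy : ∃ z', z' ∈ A ∧ f z' = f z := ⟨z, hz, rfl⟩
    have := hy.choose_spec
    have : h (f z) = hy.choose := by rw [hh]; simp only [dif_pos hy]
    rw [this]
    exact hinj _ _ hy.choose_spec.2
  set K : NNReal := (s / r).toNNReal with hK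
  have hKl : ∀ x y : EuclideanSpace ℝ (Fin d), x ∈ f '' A → y ∈ f '' A → dist (h x) (h y) ≤ (K : ℝ) * dist x y := by
    rintro x y ⟨z, hz, rfl⟩ ⟨w, hw, rfl⟩
    rw [hinv z hz, hinv w hw]
    have := hexp z w
    have hKr : (K : ℝ) = s / r := Real.coe_toNNReal _ (div_nonneg hs0.le hr.le)
    rw [hKr]
    rw [hl] at this
    rw [div_mul_eq_mul_div, le_div_iff₀ hr]
    calc dist z w * r = (r / s * dist z w) * s := by field_simp
      _ ≤ dist (f z) (f w) * s := by
          apply mul_le_mul_of_nonneg_right this hs0.le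
      _ = s * dist (f z) (f w) := mul_comm _ _
  have hlip : LipschitzOnWith K h (f '' A) :=
    LipschitzOnWith.of_dist_le_mul fun x hx y hy => hKl x y hx hy
  have hcover : A ⊆ h '' (f '' A) := by
    intro z hz
    exact ⟨f z, Set.mem_image_of_mem f hz, hinv z hz⟩
  -- Hausdorff measure chain
  have hchain : μH[(d : ℝ)] A ≤ (K : ℝ≥0∞) ^ (d : ℝ) * μH[(d : ℝ)] B := by
    calc μH[(d : ℝ)] A ≤ μH[(d : ℝ)] (h '' (f '' A)) := measure_mono hcover
      _ ≤ (K : ℝ≥0∞) ^ (d : ℝ) * μH[(d : ℝ)] (f '' A) :=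
          hlip.hausdorffMeasure_image_le (Nat.cast_nonneg d)
      _ ≤ (K : ℝ≥0∞) ^ (d : ℝ) * μH[(d : ℝ)] B := by
          gcongr
          exact Set.image_subset_iff.2 fun z hz => himg z hz
  -- Hausdorff measure is a Haar measure, hence a multiple of volume
  have hHaar : Measure.IsAddHaarMeasure (μH[(d : ℝ)] : Measure (EuclideanSpace ℝ (Fin d))) := by
    have hfr : (Module.finrank ℝ (EuclideanSpace ℝ (Fin d)) : ℝ) = (d : ℝ) := by
      simp [finrank_euclideanSpace_fin]
    have := MeasureTheory.isAddHaarMeasure_hausdorffMeasure (E := EuclideanSpace ℝ (Fin d))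
    rwa [hfr] at this
  set c : NNReal := Measure.addHaarScalarFactor (μH[(d : ℝ)] : Measure (EuclideanSpace ℝ (Fin d))) (volume : Measure (EuclideanSpace ℝ (Fin d)))
    with hc
  have hmu : (μH[(d : ℝ)] : Measure (EuclideanSpace ℝ (Fin d))) = c • (volume : Measure (EuclideanSpace ℝ (Fin d))) :=
    Measure.isAddLeftInvariant_eq_smul _ _
  have hcpos : 0 < c := Measure.addHaarScalarFactor_pos_of_isAddHaarMeasure _ _
  have happ : ∀ X : Set (EuclideanSpace ℝ (Fin d)), μH[(d : ℝ)] X = (c : ℝ≥0∞) * volume X := by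
    intro X
    rw [hmu]
    rw [Measure.smul_apply, ENNReal.smul_def, smul_eq_mul]
  rw [happ, happ] at hchain
  have hfinal : volume A ≤ (K : ℝ≥0∞) ^ (d : ℝ) * volume B := by
    have hrearr : (c : ℝ≥0∞) * volume A ≤ (c : ℝ≥0∞) * ((K : ℝ≥0∞) ^ (d : ℝ) * volume B) := by
      calc (c : ℝ≥0∞) * volume A ≤ (K : ℝ≥0∞) ^ (d : ℝ) * ((c : ℝ≥0∞) * volume B) := hchain
        _ = (c : ℝ≥0∞) * ((K : ℝ≥0∞) ^ (d : ℝ) * volume B) := by ring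
    exact (ENNReal.mul_le_mul_iff_right (by exact_mod_cast hcpos.ne') ENNReal.coe_ne_top).1 hrearr
  have hKpow : (K : ℝ≥0∞) ^ (d : ℝ) = ENNReal.ofReal ((s / r) ^ d) := by
    rw [ENNReal.rpow_natCast, ENNReal.ofReal_pow (div_nonneg hs0.le hr.le)]
    rfl
  rw [hKpow] at hfinal
  exact hfinal
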